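/- Generalized type I, Red wins when Blue has no guards: on a board with no long b-piles (any ℓ ≥ 0), if Blue is the active player with m_b = 0, then Red wins by applying strategy S at every round. -/

import Mathlib

/-!  A model of the two-player, two-color endgame of *So Long Sucker*.

The two remaining players are Blue and Red, identified with their colors.
A pile is a finite sequence of chips (head = top chip).  A game state
records the board, the number of chips of each color held by each player,
and the active player. -/

/-- The two chip colors (also naming the two remaining players). -/
inductive Color : Type
  | b : Color
  | r : Color
deriving DecidableEq, Repr

/-- The opponent's color. -/
def Color.other : Color → Color
  | Color.b => Color.r
  | Color.r => Color.b

/-- A pile of chips; the head of the list is the top chip. -/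
abbrev Pile := List Color

/-- A game state: the board (a list of piles), the chip counts
`chips p c` = number of `c`-colored chips held by player `p`,
and the active player. -/
structure GState where
  board : List Pile
  chips : Color → Color → ℕ
  active : Color

/-- Total number of chips in player `p`'s possession. -/
def totalChips (s : GState) (p : Color) : ℕ :=
  s.chips p Color.b + s.chips p Color.r

/-- The Next Player Rule in the two-player, two-color endgame, as a function
of the pile played on (before the placement) and the color of the placed
chip: if the placement triggers a capture, the capturing player moves next;
otherwise the player of the other color than the placed chip moves next
(this is the unique player allowed by the Next Player Rule). -/
def nextActive (π : Pile) (c : Color) : Color :=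
  if π.head? = some c then c else c.other

/-- Placement of a chip of color `c` on pile number `i` by the active
player, with the Capture Rule and Next Player Rule applied. -/
inductive PlaceOn (i : ℕ) : GState → GState → Prop
  | noCapture (s : GState) (c : Color)
      (hi : i < s.board.length)
      (hc : 0 < s.chips s.active c)
      (hcap : (s.board.getD i []).head? ≠ some c) :
      PlaceOn i s
        { board := s.board.set i (c :: s.board.getD i []),
          chips := fun p x =>
            s.chips p x - (if p = s.active ∧ x = c then 1 else 0),
          active := c.other }
  | capture (s : GState) (c : Color) (d : Color)
      (hi : i < s.board.length)
      (hc : 0 < s.chips s.active c)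
      (hcap : (s.board.getD i []).head? = some c)
      (hd : d ∈ c :: s.board.getD i []) :
      PlaceOn i s
        { board := s.board.set i [],
          chips := fun p x =>
            (s.chips p x - (if p = s.active ∧ x = c then 1 else 0))
              + (if p = c then
                  (c :: s.board.getD i []).count x - (if d = x then 1 else 0)
                 else 0),
          active := c }

/-- One legal move of the active player: placing a chip on some pile
(resolving captures), discarding a prisoner, or donating a prisoner
to the opponent. -/
inductive Step : GState → GState → Prop
  | place (i : ℕ) (s s' : GState) (h : PlaceOn i s s') : Step s s'
  | discardPrisoner (s : GState)
      (hc : 0 < s.chips s.active s.active.other) :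
      Step s
        { board := s.board,
          chips := fun p x =>
            s.chips p x - (if p = s.active ∧ x = s.active.other then 1 else 0),
          active := s.active }
  | donatePrisoner (s : GState)
      (hc : 0 < s.chips s.active s.active.other) :
      Step s
        { board := s.board,
          chips := fun p x =>
            if x = s.active.other then
              (if p = s.active then s.chips p x - 1 else s.chips p x + 1)
            else s.chips p x,
          active := s.active }

/-- Player `p` has a winning strategy from state `s`: either the opponent is
to move with no chips (and `p` refuses to donate), so the opponent is
eliminated and `p` wins; or it is `p`'s turn and some move of `p` leads to a
winning position; or it is the opponent's turn and every move of the opponent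
leads to a position winning for `p`. -/
inductive WinsFor (p : Color) : GState → Prop
  | elim (s : GState) (h : s.active ≠ p) (h0 : totalChips s s.active = 0) :
      WinsFor p s
  | mine (s s' : GState) (h : s.active = p) (hs : Step s s')
      (hw : WinsFor p s') : WinsFor p s
  | theirs (s : GState) (h : s.active ≠ p) (h0 : 0 < totalChips s s.active)
      (hw : ∀ s', Step s s' → WinsFor p s') : WinsFor p s

/-- The index of the pile on which strategy `S` places its guard:
the longest pile whose top chip has the opponent's color `q`,
or an empty pile if there is no `q`-pile. -/
def targetIdx (q : Color) (l : List Pile) : ℕ :=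
  let opp := l.filter (fun π => π.head? == some q)
  if opp.isEmpty then
    l.findIdx (fun π => π.isEmpty)
  else
    l.findIdx (fun π =>
      (π.head? == some q) &&
        (π.length == (opp.map List.length).foldr Nat.max 0))

/-- The state resulting from the active player `p` playing one full round of
strategy `S`: capture every `p`-pile (discarding an opponent chip from a
captured pile when it contains one, and a `p` chip otherwise), discard all
prisoners, and finally place one guard on the longest opponent-colored pile,
or on an empty pile if there is none.  The turn then passes to the
opponent. -/
def SRound (s : GState) : GState :=
  let p := s.active
  let q := p.other
  let capt := s.board.filter (fun π => π.head? == some p)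
  let b1 := s.board.map (fun π => if π.head? == some p then ([] : Pile) else π)
  let g1 := s.chips p p +
      (capt.map (fun π =>
        if π.contains q then π.count p else π.count p - 1)).sum
  let i := targetIdx q b1
  { board := b1.set i (p :: b1.getD i []),
    chips := fun pl x =>
      if pl = p then (if x = p then g1 - 1 else 0) else s.chips pl x,
    active := q }

/-- Player `p` wins by applying strategy `S` at each of `p`'s rounds,
whatever the opponent plays. -/
inductive WinsWithS (p : Color) : GState → Prop
  | elim (s : GState) (h : s.active ≠ p) (h0 : totalChips s s.active = 0) :
      WinsWithS p s
  | mine (s : GState) (h : s.active = p) (hg : 0 < s.chips p p)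
      (hw : WinsWithS p (SRound s)) : WinsWithS p s
  | theirs (s : GState) (h : s.active ≠ p) (h0 : 0 < totalChips s s.active)
      (hw : ∀ s', Step s s' → WinsWithS p s') : WinsWithS p s

/-- Every pile on the board is an alternating sequence of colors. -/
def Alternating (l : List Pile) : Prop := ∀ π ∈ l, π.Chain' (· ≠ ·)

/-- The long piles (length at least 2) whose top chip has color `c`. -/
def longPiles (c : Color) (l : List Pile) : List Pile :=
  l.filter (fun π => decide (2 ≤ π.length) && (π.head? == some c))

/-- The sum, over all long `c`-piles, of the number of `c` chips they
contain (e.g. `Σᵢ |ρᵢ|_r` for `c = r`). -/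
def longSum (c : Color) (l : List Pile) : ℕ :=
  ((longPiles c l).map (fun π => π.count c)).sum

/-- The maximum, over all long `c`-piles, of the number of `c` chips they
contain (`0` if there is no long `c`-pile). -/
def longMax (c : Color) (l : List Pile) : ℕ :=
  ((longPiles c l).map (fun π => π.count c)).foldr Nat.max 0

/-- The total number of chips in the game (in hands and on the board). -/
def chipCount (s : GState) : ℕ :=
  totalChips s Color.b + totalChips s Color.r + (s.board.map List.length).sum


section Helpers

lemma count_b_add_count_r (l : List Color) : l.count Color.b + l.count Color.r = l.length := by
  induction l with
  | nil => simp
  | cons a t ih => cases a <;> simp [List.count_cons] <;> omega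

lemma count_pos_of_head? (l : List Color) (a : Color) (h : l.head? = some a) :
    1 ≤ l.count a := by
  cases l with
  | nil => simp at h
  | cons x t => simp at h; subst h; simp [List.count_cons]

lemma sum_map_set (l : List Pile) (i : ℕ) (x : Pile) (hi : i < l.length) :
    ((l.set i x).map List.length).sum + (l.getD i []).length
      = (l.map List.length).sum + x.length := by
  induction l generalizing i with
  | nil => simp at hi
  | cons a t ih =>
    cases i with
    | zero => simp; omega
    | succ j =>
      have := ih j (by simpa using hi)
      simp only [List.set_cons_succ, List.getD_cons_succ, List.map_cons, List.sum_cons]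
      omega

lemma sum_map_set_cons_le (l : List Pile) (i : ℕ) (c : Color) :
    ((l.set i (c :: l.getD i [])).map List.length).sum ≤ (l.map List.length).sum + 1 := by
  by_cases hi : i < l.length
  · have := sum_map_set l i (c :: l.getD i []) hi
    simp only [List.length_cons] at this
    omega
  · rw [List.set_eq_of_length_le (by omega)]
    omega

lemma split_sum (l : List Pile) (p : Pile → Bool) :
    ((l.map fun π => if p π then ([] : Pile) else π).map List.length).sum
      + ((l.filter p).map List.length).sum = (l.map List.length).sum := by
  induction l with
  | nil => simp
  | cons a t ih =>
    by_cases h : p a <;>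
      simp only [List.map_cons, List.filter_cons, h, if_true, if_false, List.sum_cons,
        List.length_nil, Bool.false_eq_true, Bool.true_eq_false] <;> omega

end Helpers


lemma SRound_board' (t : GState) :
    (SRound t).board =
      (t.board.map fun π => if π.head? == some t.active then ([] : Pile) else π).set
        (targetIdx t.active.other
          (t.board.map fun π => if π.head? == some t.active then ([] : Pile) else π))
        (t.active ::
          (t.board.map fun π => if π.head? == some t.active then ([] : Pile) else π).getD
            (targetIdx t.active.other
              (t.board.map fun π => if π.head? == some t.active then ([] : Pile) else π)) []) :=
  rfl

lemma SRound_chips' (t : GState) :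
    (SRound t).chips = fun pl x =>
      if pl = t.active then
        (if x = t.active then
          (t.chips t.active t.active +
            ((t.board.filter fun π => π.head? == some t.active).map
              (fun π => if π.contains t.active.other then π.count t.active
                else π.count t.active - 1)).sum) - 1
         else 0)
      else t.chips pl x :=
  rfl

lemma SRound_active' (t : GState) : (SRound t).active = t.active.other := rfl

lemma sround_active (t : GState) (ht : t.active = Color.r) : (SRound t).active = Color.b := by
  rw [SRound_active', ht]; rfl

lemma sround_chips_b (t : GState) (ht : t.active = Color.r) (x : Color) :
    (SRound t).chips Color.b x = t.chips Color.b x := by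
  rw [SRound_chips', ht]; simp

lemma sround_chipCount (bd : List Pile) (ch : Color → Color → ℕ)
    (hg : 1 ≤ ch Color.r Color.r) :
    chipCount (SRound ⟨bd, ch, Color.r⟩) ≤ chipCount ⟨bd, ch, Color.r⟩ := by
  have hq : chipCount (SRound ⟨bd, ch, Color.r⟩)
      = ch Color.b Color.b + ch Color.b Color.r
        + (0 + (ch Color.r Color.r
            + ((bd.filter fun π => π.head? == some Color.r).map
                (fun π => if π.contains Color.b then π.count Color.r
                  else π.count Color.r - 1)).sum - 1))
        + (((bd.map fun π => if π.head? == some Color.r then ([] : Pile) else π).set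
              (targetIdx Color.b
                (bd.map fun π => if π.head? == some Color.r then ([] : Pile) else π))
              (Color.r ::
                (bd.map fun π => if π.head? == some Color.r then ([] : Pile) else π).getD
                  (targetIdx Color.b
                    (bd.map fun π => if π.head? == some Color.r then ([] : Pile) else π))
                  [])).map List.length).sum := rfl
  have hq2 : chipCount ⟨bd, ch, Color.r⟩
      = ch Color.b Color.b + ch Color.b Color.r
        + (ch Color.r Color.b + ch Color.r Color.r) + (bd.map List.length).sum := rfl
  rw [hq, hq2]
  have h1 := sum_map_set_cons_le
    (bd.map fun π => if π.head? == some Color.r then ([] : Pile) else π)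
    (targetIdx Color.b (bd.map fun π => if π.head? == some Color.r then ([] : Pile) else π))
    Color.r
  have h2 := split_sum bd (fun π => π.head? == some Color.r)
  beta_reduce at h2
  have h3 : ((bd.filter fun π => π.head? == some Color.r).map
        (fun π => if π.contains Color.b then π.count Color.r
          else π.count Color.r - 1)).sum
      ≤ ((bd.filter fun π => π.head? == some Color.r).map List.length).sum := by
    refine List.sum_le_sum fun π hπ => ?_
    have h : π.count Color.r ≤ π.length := List.count_le_length
    split
    · exact h
    · exact le_trans (Nat.sub_le _ _) h
  refine le_trans (Nat.add_le_add_left h1 _) ?_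
  omega

lemma to_red_turn (n : ℕ)
    (ih : ∀ s : GState, s.active = Color.b → s.chips Color.b Color.b = 0 →
      chipCount s + totalChips s Color.b ≤ n → WinsWithS Color.r s)
    (bd : List Pile) (ch : Color → Color → ℕ)
    (hb : ch Color.b Color.b = 0)
    (hg : 1 ≤ ch Color.r Color.r)
    (hm : chipCount ⟨bd, ch, Color.r⟩ + totalChips ⟨bd, ch, Color.r⟩ Color.b ≤ n) :
    WinsWithS Color.r ⟨bd, ch, Color.r⟩ := by
  refine WinsWithS.mine _ rfl hg ?_
  apply ih
  · exact sround_active _ rfl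
  · rw [sround_chips_b _ rfl]; exact hb
  · have hcc := sround_chipCount bd ch hg
    have h1 := sround_chips_b (⟨bd, ch, Color.r⟩ : GState) rfl Color.b
    have h2 := sround_chips_b (⟨bd, ch, Color.r⟩ : GState) rfl Color.r
    unfold chipCount totalChips at *
    omega

lemma red_wins_aux (n : ℕ) : ∀ s : GState, s.active = Color.b →
    s.chips Color.b Color.b = 0 →
    chipCount s + totalChips s Color.b ≤ n → WinsWithS Color.r s := by
  induction n with
  | zero =>
    intro s ha hb hm
    refine WinsWithS.elim s (by rw [ha]; exact fun h => Color.noConfusion h) ?_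
    rw [ha]
    unfold chipCount totalChips at hm
    unfold totalChips
    omega
  | succ n ih =>
    intro s ha hb hm
    by_cases h0 : totalChips s Color.b = 0
    · exact WinsWithS.elim s (by rw [ha]; exact fun h => Color.noConfusion h)
        (by rw [ha]; exact h0)
    · refine WinsWithS.theirs s (by rw [ha]; exact fun h => Color.noConfusion h)
        (by rw [ha]; omega) ?_
      intro s' hstep
      cases hstep with
      | place i _ _ h =>
        cases h with
        | noCapture c hi hc hcap =>
          cases c with
          | b => rw [ha, hb] at hc; exact absurd hc (lt_irrefl 0)
          | r =>
            apply ih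
            · rfl
            · simp [ha, hb]
            · have hsum := sum_map_set s.board i (Color.r :: s.board.getD i []) hi
              rw [ha] at hc
              unfold chipCount totalChips at hm ⊢
              simp [ha] at hsum ⊢
              omega
        | capture c d hi hc hcap hd =>
          cases c with
          | b => rw [ha, hb] at hc; exact absurd hc (lt_irrefl 0)
          | r =>
            rw [ha] at hc
            have hcnt : 1 ≤ (s.board.getD i []).count Color.r :=
              count_pos_of_head? _ _ hcap
            have hlen := count_b_add_count_r (s.board.getD i [])
            have hdm : 0 < (Color.r :: s.board.getD i []).count d :=
              List.count_pos_iff.mpr hd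
            apply to_red_turn n ih
            · simp [ha, hb]
            · cases d <;>
                simp [ha, List.count_cons, -List.getD_eq_getElem?_getD] at hdm ⊢ <;> omega
            · have hsum := sum_map_set s.board i ([] : Pile) hi
              unfold chipCount totalChips at hm ⊢
              cases d <;>
                simp [ha, List.count_cons, -List.getD_eq_getElem?_getD] at hdm hsum ⊢ <;>
                omega
      | discardPrisoner _ hc =>
        simp [ha, Color.other] at hc
        apply ih
        · exact ha
        · simp [ha, Color.other, hb]
        · unfold chipCount totalChips at hm ⊢
          simp [ha, Color.other]
          omega
      | donatePrisoner _ hc =>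
        simp [ha, Color.other] at hc
        apply ih
        · exact ha
        · simp [ha, Color.other, hb]
        · unfold chipCount totalChips at hm ⊢
          simp [ha, Color.other]
          omega

/-- **Generalized type I, Red wins when Blue has no guards.**  Let the board
be of generalized type I (all piles alternating, no long `b`-piles, any
number of long `r`-piles) and let Blue be the active player.  If `m_b = 0`
when Blue's turn starts, then Red wins by applying strategy `S` at every one
of Red's rounds. -/
theorem genTypeI_red_wins_no_guards (s : GState)
    (halt : Alternating s.board)
    (hroom : chipCount s ≤ s.board.length)
    (hactive : s.active = Color.b)
    (hI : longPiles Color.b s.board = [])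
    (hmb : s.chips Color.b Color.b = 0) :
    WinsWithS Color.r s := by
  exact red_wins_aux (chipCount s + totalChips s Color.b) s hactive hmb le_rfl
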